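/- The generating function of m-labeled binary trees that avoid a fixed m-labeled binary tree u of size p is A(z) = (1 − 2mz − √(1 − 4mz + 4mz^{p+2}))/(2mz²); consequently the generating function of m-labeled binary trees containing u as a subtree is C(z) = (√(1 − 4mz + 4mz^{p+2}) − √(1−4mz))/(2mz²), as an identity of formal power series. -/

import Mathlib

inductive BTree (m : ℕ) : Type where
  | node : Fin m → Option (BTree m) → Option (BTree m) → BTree m

namespace BTree
variable {m : ℕ}

def edges : BTree m → ℕ
  | .node _ none none => 0
  | .node _ (some l) none => 1 + edges l
  | .node _ none (some r) => 1 + edges r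
  | .node _ (some l) (some r) => 2 + edges l + edges r

def subs : BTree m → List (BTree m)
  | .node a none none => [.node a none none]
  | .node a (some l) none => .node a (some l) none :: subs l
  | .node a none (some r) => .node a none (some r) :: subs r
  | .node a (some l) (some r) => .node a (some l) (some r) :: (subs l ++ subs r)

def rootDeg : BTree m → ℕ
  | .node _ l r => (if l.isSome then 1 else 0) + (if r.isSome then 1 else 0)

end BTree

open PowerSeries

namespace BTreeAux
open BTree

variable {m : ℕ}

def optE : Option (BTree m) → ℕ
  | none => 0
  | some t => 1 + t.edges

def lab : BTree m → Fin m | .node a _ _ => a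
def kidL : BTree m → Option (BTree m) | .node _ l _ => l
def kidR : BTree m → Option (BTree m) | .node _ _ r => r

lemma eta (t : BTree m) : BTree.node (lab t) (kidL t) (kidR t) = t := by
  cases t; rfl

lemma edges_eq (t : BTree m) : t.edges = optE (kidL t) + optE (kidR t) := by
  obtain ⟨a, l, r⟩ := t
  cases l <;> cases r <;> simp [BTree.edges, optE, kidL, kidR] <;> ring

lemma subs_eq (t : BTree m) :
    subs t = t :: ((kidL t).elim [] subs ++ (kidR t).elim [] subs) := by
  obtain ⟨a, l, r⟩ := t
  cases l <;> cases r <;> simp [BTree.subs, kidL, kidR]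

lemma mem_subs_self (t : BTree m) : t ∈ subs t := by
  rw [subs_eq]; exact List.mem_cons_self

theorem edges_le_of_mem_subs : ∀ (t s : BTree m), s ∈ subs t → s.edges ≤ t.edges
  | .node a none none, s, h => by
      simp [BTree.subs] at h; simp [h]
  | .node a (some l) none, s, h => by
      rcases (by simpa [BTree.subs] using h : s = BTree.node a (some l) none ∨ s ∈ subs l) with h | h
      · simp [h]
      · have := edges_le_of_mem_subs l s h
        simp [BTree.edges]; omega
  | .node a none (some r), s, h => by
      rcases (by simpa [BTree.subs] using h : s = BTree.node a none (some r) ∨ s ∈ subs r) with h | h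
      · simp [h]
      · have := edges_le_of_mem_subs r s h
        simp [BTree.edges]; omega
  | .node a (some l) (some r), s, h => by
      rcases (by simpa [BTree.subs] using h :
        s = BTree.node a (some l) (some r) ∨ s ∈ subs l ∨ s ∈ subs r) with h | h | h
      · simp [h]
      · have := edges_le_of_mem_subs l s h
        simp [BTree.edges]; omega
      · have := edges_le_of_mem_subs r s h
        simp [BTree.edges]; omega

end BTreeAux

namespace BTreeAux
variable {m : ℕ}
open BTree

lemma kidL_le (t : BTree m) : ∀ s ∈ kidL t, 1 + s.edges ≤ t.edges := by
  intro s hs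
  have h := edges_eq t
  rw [Option.mem_def] at hs
  rw [hs] at h
  simp [optE] at h
  omega

lemma kidR_le (t : BTree m) : ∀ s ∈ kidR t, 1 + s.edges ≤ t.edges := by
  intro s hs
  have h := edges_eq t
  rw [Option.mem_def] at hs
  rw [hs] at h
  simp [optE] at h
  omega

lemma pmap_inj {p : BTree m → Prop} {o o' : Option (BTree m)} {h : ∀ a ∈ o, p a}
    {h' : ∀ a ∈ o', p a}
    (e : Option.pmap (fun s hs => (⟨s, hs⟩ : {t : BTree m // p t})) o h =
      Option.pmap (fun s hs => (⟨s, hs⟩ : {t : BTree m // p t})) o' h') : o = o' := by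
  cases o <;> cases o' <;> simp_all [Option.pmap]

instance optFinite {α : Type} [Finite α] : Finite (Option α) :=
  Finite.of_equiv _ (Equiv.optionEquivSumPUnit.{0} α).symm

theorem finite_le : ∀ n : ℕ, Finite {t : BTree m // t.edges ≤ n}
  | 0 => by
    refine Finite.of_injective (fun t => lab t.1) ?_
    rintro ⟨t, ht⟩ ⟨t', ht'⟩ h
    have e1 : kidL t = none := by
      cases hk : kidL t with
      | none => rfl
      | some s => have := kidL_le t s hk; omega
    have e2 : kidR t = none := by
      cases hk : kidR t with
      | none => rfl
      | some s => have := kidR_le t s hk; omega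
    have e1' : kidL t' = none := by
      cases hk : kidL t' with
      | none => rfl
      | some s => have := kidL_le t' s hk; omega
    have e2' : kidR t' = none := by
      cases hk : kidR t' with
      | none => rfl
      | some s => have := kidR_le t' s hk; omega
    apply Subtype.ext
    simp only at h
    show t = t'
    have e : BTree.node (lab t) (kidL t) (kidR t) = BTree.node (lab t') (kidL t') (kidR t') := by
      rw [e1, e2, e1', e2', h]
    rwa [eta, eta] at e
  | (n+1) => by
    haveI : Finite {t : BTree m // t.edges ≤ n} := finite_le n
    refine Finite.of_injective (fun t : {t : BTree m // t.edges ≤ n+1} =>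
      (lab t.1,
       Option.pmap (fun s (hs : s.edges ≤ n) => (⟨s, hs⟩ : {t : BTree m // t.edges ≤ n}))
         (kidL t.1) (fun s hs => by have := kidL_le t.1 s hs; have := t.2; omega),
       Option.pmap (fun s (hs : s.edges ≤ n) => (⟨s, hs⟩ : {t : BTree m // t.edges ≤ n}))
         (kidR t.1) (fun s hs => by have := kidR_le t.1 s hs; have := t.2; omega))) ?_
    rintro ⟨t, ht⟩ ⟨t', ht'⟩ h
    simp only [Prod.mk.injEq] at h
    obtain ⟨h1, h2, h3⟩ := h
    apply Subtype.ext
    show t = t'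
    have e : BTree.node (lab t) (kidL t) (kidR t) = BTree.node (lab t') (kidL t') (kidR t') := by
      rw [h1, pmap_inj h2, pmap_inj h3]
    rwa [eta, eta] at e

theorem finite_sub (P : BTree m → Prop) (k n : ℕ) : Finite {t : BTree m // k + t.edges = n ∧ P t} := by
  haveI : Finite {t : BTree m // t.edges ≤ n} := finite_le n
  refine Finite.of_injective
    (fun t => (⟨t.1, by have := t.2.1; omega⟩ : {t : BTree m // t.edges ≤ n})) ?_
  rintro ⟨t, ht⟩ ⟨t', ht'⟩ h
  simpa [Subtype.ext_iff] using h

theorem finite_pair (P : BTree m → Prop) (n : ℕ) :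
    Finite {lr : BTree m × BTree m // 2 + lr.1.edges + lr.2.edges = n ∧ P lr.1 ∧ P lr.2} := by
  haveI : Finite {t : BTree m // t.edges ≤ n} := finite_le n
  refine Finite.of_injective
    (fun t => ((⟨t.1.1, by have := t.2.1; omega⟩ : {t : BTree m // t.edges ≤ n}),
               (⟨t.1.2, by have := t.2.1; omega⟩ : {t : BTree m // t.edges ≤ n}))) ?_
  rintro ⟨⟨a, b⟩, ht⟩ ⟨⟨a', b'⟩, ht'⟩ h
  simpa [Subtype.ext_iff, Prod.ext_iff] using h

end BTreeAux

namespace BTreeAux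
variable {m : ℕ}
open BTree Finset

def QO (Q : BTree m → Prop) : Option (BTree m) → Prop := fun o => ∀ s ∈ o, Q s

lemma QO_none (Q : BTree m → Prop) : QO Q none := by intro s hs; cases hs

lemma QO_some (Q : BTree m → Prop) (t : BTree m) : QO Q (some t) ↔ Q t := by
  constructor
  · intro h; exact h t rfl
  · intro h s hs; cases hs; exact h

abbrev Dset (Q : BTree m → Prop) (n : ℕ) : Type :=
  {t : BTree m // t.edges = n ∧ QO Q (kidL t) ∧ QO Q (kidR t)}

abbrev T0 (n : ℕ) : Type := {_u : Unit // n = 0}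

abbrev T1 (Q : BTree m → Prop) (n : ℕ) : Type := {l : BTree m // 1 + l.edges = n ∧ Q l}

abbrev T2 (Q : BTree m → Prop) (n : ℕ) : Type :=
  {lr : BTree m × BTree m // 2 + lr.1.edges + lr.2.edges = n ∧ Q lr.1 ∧ Q lr.2}

def mfwd (Q : BTree m → Prop) (n : ℕ) : Dset Q n → Fin m × (T0 n ⊕ T1 Q n ⊕ T1 Q n ⊕ T2 Q n)
  | ⟨.node a none none, h⟩ => (a, .inl ⟨(), by have := h.1; simp [BTree.edges] at this; omega⟩)
  | ⟨.node a (some l) none, h⟩ => (a, .inr (.inl ⟨l,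
      ⟨by have := h.1; simpa [BTree.edges] using this, ((QO_some Q l).1 h.2.1)⟩⟩))
  | ⟨.node a none (some r), h⟩ => (a, .inr (.inr (.inl ⟨r,
      ⟨by have := h.1; simpa [BTree.edges] using this, ((QO_some Q r).1 h.2.2)⟩⟩)))
  | ⟨.node a (some l) (some r), h⟩ => (a, .inr (.inr (.inr ⟨(l, r),
      ⟨by have := h.1; simpa [BTree.edges] using this,
        (QO_some Q l).1 h.2.1, (QO_some Q r).1 h.2.2⟩⟩)))

def mbwd (Q : BTree m → Prop) (n : ℕ) : Fin m × (T0 n ⊕ T1 Q n ⊕ T1 Q n ⊕ T2 Q n) → Dset Q n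
  | (a, .inl ⟨_, h⟩) => ⟨.node a none none,
      ⟨by simp [BTree.edges, h], QO_none Q, QO_none Q⟩⟩
  | (a, .inr (.inl ⟨l, h⟩)) => ⟨.node a (some l) none,
      ⟨by simpa [BTree.edges] using h.1, (QO_some Q l).2 h.2, QO_none Q⟩⟩
  | (a, .inr (.inr (.inl ⟨r, h⟩))) => ⟨.node a none (some r),
      ⟨by simpa [BTree.edges] using h.1, QO_none Q, (QO_some Q r).2 h.2⟩⟩
  | (a, .inr (.inr (.inr ⟨⟨l, r⟩, h⟩))) => ⟨.node a (some l) (some r),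
      ⟨by simpa [BTree.edges] using h.1, (QO_some Q l).2 h.2.1, (QO_some Q r).2 h.2.2⟩⟩

def masterEquiv (Q : BTree m → Prop) (n : ℕ) :
    Dset Q n ≃ Fin m × (T0 n ⊕ T1 Q n ⊕ T1 Q n ⊕ T2 Q n) where
  toFun := mfwd Q n
  invFun := mbwd Q n
  left_inv := by
    rintro ⟨⟨a, l, r⟩, h⟩
    cases l <;> cases r <;> rfl
  right_inv := by
    rintro ⟨a, ⟨⟨⟩, h⟩ | ⟨l, h⟩ | ⟨r, h⟩ | ⟨⟨l, r⟩, h⟩⟩ <;> rfl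

instance (Q : BTree m → Prop) (n : ℕ) : Finite (T1 Q n) := finite_sub Q 1 n

instance (Q : BTree m → Prop) (n : ℕ) : Finite (T2 Q n) := finite_pair Q n

instance (Q : BTree m → Prop) (n : ℕ) : Finite {t : BTree m // t.edges = n ∧ Q t} := by
  have e : {t : BTree m // t.edges = n ∧ Q t} ≃ {t : BTree m // 0 + t.edges = n ∧ Q t} :=
    Equiv.subtypeEquivRight (fun t => by constructor <;> (rintro ⟨h1, h2⟩; exact ⟨by omega, h2⟩))
  haveI := finite_sub Q 0 n
  exact Finite.of_equiv _ e.symm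

lemma card_T0 (n : ℕ) : Nat.card (T0 n) = if n = 0 then 1 else 0 := by
  by_cases h : n = 0
  · rw [if_pos h]
    haveI : Unique (T0 n) := ⟨⟨⟨(), h⟩⟩, by rintro ⟨⟨⟩, _⟩; rfl⟩
    exact Nat.card_unique
  · rw [if_neg h]
    haveI : IsEmpty (T0 n) := ⟨by rintro ⟨_, h'⟩; exact h h'⟩
    exact Nat.card_of_isEmpty

lemma card_T1 (Q : BTree m → Prop) (n : ℕ) :
    Nat.card (T1 Q n) = if n = 0 then 0 else Nat.card {t : BTree m // t.edges = n - 1 ∧ Q t} := by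
  by_cases h : n = 0
  · rw [if_pos h]
    haveI : IsEmpty (T1 Q n) := ⟨by rintro ⟨l, h1, _⟩; omega⟩
    exact Nat.card_of_isEmpty
  · rw [if_neg h]
    exact Nat.card_congr (Equiv.subtypeEquivRight (fun t => by
      constructor <;> (rintro ⟨h1, h2⟩; exact ⟨by omega, h2⟩)))

lemma card_sigma' {ι : Type*} [Fintype ι] (f : ι → Type*) [∀ i, Finite (f i)] :
    Nat.card (Σ i, f i) = ∑ i, Nat.card (f i) := by
  haveI := fun i => Fintype.ofFinite (f i)
  simp [Nat.card_eq_fintype_card]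

lemma card_T2_lt (Q : BTree m → Prop) (n : ℕ) (h : n < 2) : Nat.card (T2 Q n) = 0 := by
  haveI : IsEmpty (T2 Q n) := ⟨by rintro ⟨⟨l, r⟩, h1, _⟩; omega⟩
  exact Nat.card_of_isEmpty

lemma card_T2 (Q : BTree m → Prop) (k : ℕ) :
    Nat.card (T2 Q (k + 2)) = ∑ ij ∈ Finset.HasAntidiagonal.antidiagonal k,
      Nat.card {t : BTree m // t.edges = ij.1 ∧ Q t} *
        Nat.card {t : BTree m // t.edges = ij.2 ∧ Q t} := by
  have e : T2 Q (k + 2) ≃ Σ ij : (Finset.HasAntidiagonal.antidiagonal k : Finset (ℕ × ℕ)),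
      ({t : BTree m // t.edges = (ij : ℕ × ℕ).1 ∧ Q t} ×
       {t : BTree m // t.edges = (ij : ℕ × ℕ).2 ∧ Q t}) :=
    { toFun := fun x => ⟨⟨(x.1.1.edges, x.1.2.edges), Finset.HasAntidiagonal.mem_antidiagonal.2 (by
        have := x.2.1; omega)⟩, ⟨x.1.1, rfl, x.2.2.1⟩, ⟨x.1.2, rfl, x.2.2.2⟩⟩
      invFun := fun y => match y with
        | ⟨⟨⟨i, j⟩, hij⟩, ⟨l, hl⟩, ⟨r, hr⟩⟩ => ⟨(l, r), by
            have hk : i + j = k := Finset.HasAntidiagonal.mem_antidiagonal.1 hij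
            have h1 : l.edges = i := hl.1
            have h2 : r.edges = j := hr.1
            exact ⟨show 2 + l.edges + r.edges = k + 2 by omega, hl.2, hr.2⟩⟩
      left_inv := by rintro ⟨⟨l, r⟩, h⟩; rfl
      right_inv := by
        rintro ⟨⟨⟨i, j⟩, hij⟩, ⟨l, hl⟩, ⟨r, hr⟩⟩
        have hl' : l.edges = i := hl.1
        have hr' : r.edges = j := hr.1
        subst hl'
        subst hr'
        rfl }
  rw [Nat.card_congr e, card_sigma']
  rw [← Finset.sum_coe_sort (Finset.HasAntidiagonal.antidiagonal k) (fun ij =>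
    Nat.card {t : BTree m // t.edges = ij.1 ∧ Q t} *
      Nat.card {t : BTree m // t.edges = ij.2 ∧ Q t})]
  exact Finset.sum_congr rfl (fun ij _ => Nat.card_prod _ _)

lemma card_D (Q : BTree m → Prop) (n : ℕ) :
    Nat.card (Dset Q n) = m * (Nat.card (T0 n) + Nat.card (T1 Q n) + Nat.card (T1 Q n)
      + Nat.card (T2 Q n)) := by
  rw [Nat.card_congr (masterEquiv Q n), Nat.card_prod, Nat.card_eq_fintype_card, Fintype.card_fin,
    Nat.card_sum, Nat.card_sum, Nat.card_sum]
  ring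

end BTreeAux

namespace BTreeAux
variable {m : ℕ}
open BTree Finset PowerSeries

lemma card_unitSub (P : Prop) [Decidable P] :
    Nat.card {_x : Unit // P} = if P then 1 else 0 := by
  by_cases h : P
  · rw [if_pos h]
    haveI : Unique {_x : Unit // P} := ⟨⟨⟨(), h⟩⟩, by rintro ⟨⟨⟩, _⟩; rfl⟩
    exact Nat.card_unique
  · rw [if_neg h]
    haveI : IsEmpty {_x : Unit // P} := ⟨by rintro ⟨_, h'⟩; exact h h'⟩
    exact Nat.card_of_isEmpty

noncomputable def cntS (Q : BTree m → Prop) : PowerSeries ℚ :=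
  PowerSeries.mk fun n => (Nat.card {t : BTree m // t.edges = n ∧ Q t} : ℚ)

lemma coeff_aux1 (r : ℚ) (F : PowerSeries ℚ) (n : ℕ) :
    PowerSeries.coeff n (2 * C r * X * F) =
      if n = 0 then 0 else 2 * r * PowerSeries.coeff (n - 1) F := by
  have h0 : 2 * C r * X * F = C (2 * r) * (X ^ 1 * F) := by
    rw [map_mul, map_ofNat, pow_one]
    ring
  rw [h0, coeff_C_mul, coeff_X_pow_mul']
  by_cases h : n = 0
  · rw [if_pos h, if_neg (by omega), mul_zero]
  · rw [if_neg h, if_pos (by omega : 1 ≤ n)]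

lemma coeff_aux2 (r : ℚ) (F : PowerSeries ℚ) (n : ℕ) :
    PowerSeries.coeff n (C r * X ^ 2 * F ^ 2) =
      if 2 ≤ n then r * PowerSeries.coeff (n - 2) (F ^ 2) else 0 := by
  rw [mul_assoc, coeff_C_mul, coeff_X_pow_mul']
  by_cases h : 2 ≤ n
  · rw [if_pos h, if_pos h]
  · rw [if_neg h, if_neg h, mul_zero]

theorem master (Q : BTree m → Prop) :
    (PowerSeries.mk fun n => (Nat.card (Dset Q n) : ℚ)) =
      C (m : ℚ) + 2 * C (m : ℚ) * X * cntS Q + C (m : ℚ) * X ^ 2 * (cntS Q) ^ 2 := by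
  ext n
  rw [coeff_mk, map_add, map_add, coeff_aux1, coeff_aux2, PowerSeries.coeff_C,
    card_D, card_T0, card_T1]
  match n with
  | 0 =>
    rw [card_T2_lt Q 0 (by norm_num)]
    norm_num
  | 1 =>
    rw [card_T2_lt Q 1 (by norm_num)]
    have h1 : PowerSeries.coeff 0 (cntS Q) =
        (Nat.card {t : BTree m // t.edges = 0 ∧ Q t} : ℚ) := coeff_mk _ _
    norm_num [h1]
    push_cast
    ring
  | (k + 2) =>
    rw [card_T2]
    have h2 : PowerSeries.coeff (k + 2 - 2) ((cntS Q) ^ 2) =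
        ∑ ij ∈ Finset.HasAntidiagonal.antidiagonal k,
          (Nat.card {t : BTree m // t.edges = ij.1 ∧ Q t} : ℚ) *
            (Nat.card {t : BTree m // t.edges = ij.2 ∧ Q t} : ℚ) := by
      have : k + 2 - 2 = k := by omega
      rw [this, pow_two, PowerSeries.coeff_mul]
      exact Finset.sum_congr rfl (fun ij _ => by rw [cntS, coeff_mk, coeff_mk])
    have h3 : PowerSeries.coeff (k + 2 - 1) (cntS Q) =
        (Nat.card {t : BTree m // t.edges = k + 2 - 1 ∧ Q t} : ℚ) := coeff_mk _ _
    have hne : (k + 2 = 0) = False := by simp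
    have hle : (2 ≤ k + 2) = True := by simp
    simp only [hne, hle, if_false, if_true, h2, h3]
    push_cast
    ring

end BTreeAux

namespace BTreeAux
variable {m : ℕ}
open BTree Finset PowerSeries

def avoid (u : BTree m) : BTree m → Prop := fun t => u ∉ subs t

lemma avoid_node {u t : BTree m} (hne : t ≠ u) (hL : QO (avoid u) (kidL t))
    (hR : QO (avoid u) (kidR t)) : avoid u t := by
  rw [avoid, subs_eq t]
  intro hmem
  rcases List.mem_cons.1 hmem with h | h
  · exact hne h.symm
  rcases List.mem_append.1 h with h | h
  · cases hk : kidL t with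
    | none => rw [hk] at h; cases h
    | some s => rw [hk] at h; exact hL s (by rw [Option.mem_def, hk]) h
  · cases hk : kidR t with
    | none => rw [hk] at h; cases h
    | some s => rw [hk] at h; exact hR s (by rw [Option.mem_def, hk]) h

lemma avoid_kidL {u t : BTree m} (h : avoid u t) : QO (avoid u) (kidL t) := by
  intro s hs hmem
  apply h
  rw [subs_eq t]
  apply List.mem_cons_of_mem
  apply List.mem_append_left
  rw [Option.mem_def] at hs
  rw [hs]
  exact hmem

lemma avoid_kidR {u t : BTree m} (h : avoid u t) : QO (avoid u) (kidR t) := by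
  intro s hs hmem
  apply h
  rw [subs_eq t]
  apply List.mem_cons_of_mem
  apply List.mem_append_right
  rw [Option.mem_def] at hs
  rw [hs]
  exact hmem

lemma u_kidL (u : BTree m) : QO (avoid u) (kidL u) := by
  intro s hs hmem
  have h1 := edges_le_of_mem_subs s u hmem
  have h2 := kidL_le u s hs
  omega

lemma u_kidR (u : BTree m) : QO (avoid u) (kidR u) := by
  intro s hs hmem
  have h1 := edges_le_of_mem_subs s u hmem
  have h2 := kidR_le u s hs
  omega

noncomputable def e1 (u : BTree m) (n : ℕ) :
    Dset (avoid u) n ≃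
      ({t : BTree m // t.edges = n ∧ avoid u t} ⊕ {_x : Unit // n = u.edges}) := by
  classical
  exact
  { toFun := fun x => if ht : x.1 = u then .inr ⟨(), by rw [← x.2.1, ht]⟩
      else .inl ⟨x.1, x.2.1, avoid_node ht x.2.2.1 x.2.2.2⟩
    invFun := fun y => match y with
      | .inl z => ⟨z.1, z.2.1, avoid_kidL z.2.2, avoid_kidR z.2.2⟩
      | .inr z => ⟨u, z.2.symm, u_kidL u, u_kidR u⟩
    left_inv := by
      rintro ⟨t, h⟩
      by_cases ht : t = u
      · simp only [dif_pos ht]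
        exact Subtype.ext ht.symm
      · simp only [dif_neg ht]
    right_inv := by
      rintro (⟨t, h⟩ | ⟨⟨⟩, h⟩)
      · have ht : t ≠ u := fun e => (e ▸ h.2) (mem_subs_self u)
        simp only [dif_neg ht]
      · simp }

lemma claim1 (u : BTree m) (n : ℕ) : Nat.card (Dset (avoid u) n) =
    Nat.card {t : BTree m // t.edges = n ∧ avoid u t} + (if n = u.edges then 1 else 0) := by
  classical
  rw [Nat.card_congr (e1 u n), Nat.card_sum, card_unitSub]

lemma partition (u : BTree m) (n : ℕ) :
    Nat.card {t : BTree m // t.edges = n ∧ True} =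
      Nat.card {t : BTree m // t.edges = n ∧ u ∉ subs t} +
        Nat.card {t : BTree m // t.edges = n ∧ u ∈ subs t} := by
  classical
  have e : {t : BTree m // t.edges = n ∧ True} ≃
      ({t : BTree m // t.edges = n ∧ u ∉ subs t} ⊕ {t : BTree m // t.edges = n ∧ u ∈ subs t}) :=
  { toFun := fun x => if h : u ∈ subs x.1 then .inr ⟨x.1, x.2.1, h⟩ else .inl ⟨x.1, x.2.1, h⟩
    invFun := fun y => match y with
      | .inl z => ⟨z.1, z.2.1, trivial⟩
      | .inr z => ⟨z.1, z.2.1, trivial⟩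
    left_inv := by
      rintro ⟨t, h⟩
      by_cases ht : u ∈ subs t
      · simp only [dif_pos ht]
      · simp only [dif_neg ht]
    right_inv := by
      rintro (⟨t, h⟩ | ⟨t, h⟩)
      · simp only [dif_neg h.2]
      · simp only [dif_pos h.2] }
  haveI : Finite {t : BTree m // t.edges = n ∧ u ∉ subs t} := by infer_instance
  rw [Nat.card_congr e, Nat.card_sum]

end BTreeAux


/-- Generating function of `m`-labeled binary trees avoiding a fixed tree `u` of size `p`:
`A(z) = (1 − 2mz − √(1 − 4mz + 4mz^{p+2}))/(2mz²)`, and consequently the generating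
function of trees containing `u` is `C(z) = (√(1 − 4mz + 4mz^{p+2}) − √(1−4mz))/(2mz²)`,
as identities of formal power series (the square roots being the unique power series
with constant coefficient 1 squaring to the respective radicands). -/
theorem gf_binary_avoiding_containing (m p : ℕ) (u : BTree m) (hu : BTree.edges u = p) :
    ∃ S S0 : PowerSeries ℚ,
      S ^ 2 = 1 - 4 * C (m : ℚ) * X + 4 * C (m : ℚ) * X ^ (p + 2) ∧
      constantCoeff S = 1 ∧
      S0 ^ 2 = 1 - 4 * C (m : ℚ) * X ∧
      constantCoeff S0 = 1 ∧
      2 * C (m : ℚ) * X ^ 2 *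
          (mk fun n => (Nat.card {t : BTree m // BTree.edges t = n ∧ u ∉ BTree.subs t} : ℚ)) =
        1 - 2 * C (m : ℚ) * X - S ∧
      2 * C (m : ℚ) * X ^ 2 *
          (mk fun n => (Nat.card {t : BTree m // BTree.edges t = n ∧ u ∈ BTree.subs t} : ℚ)) =
        S - S0 := by
  classical
  set Aser : PowerSeries ℚ :=
    mk fun n => (Nat.card {t : BTree m // BTree.edges t = n ∧ u ∉ BTree.subs t} : ℚ) with hAdef
  set Cser : PowerSeries ℚ :=
    mk fun n => (Nat.card {t : BTree m // BTree.edges t = n ∧ u ∈ BTree.subs t} : ℚ) with hCdef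
  have hA : Aser + X ^ p =
      C (m : ℚ) + 2 * C (m : ℚ) * X * Aser + C (m : ℚ) * X ^ 2 * Aser ^ 2 := by
    have h1 := BTreeAux.master (m := m) (BTreeAux.avoid u)
    have h2 : BTreeAux.cntS (BTreeAux.avoid u) = Aser := rfl
    rw [h2] at h1
    rw [← h1]
    ext n
    rw [map_add, coeff_mk, coeff_mk, coeff_X_pow, BTreeAux.claim1 u n, hu]
    push_cast
    have e3 : {t : BTree m // t.edges = n ∧ BTreeAux.avoid u t} = {t : BTree m // t.edges = n ∧ u ∉ t.subs} := rfl
    rw [e3]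
  have hcard : ∀ k : ℕ, Nat.card (BTreeAux.Dset (m := m) (fun _ : BTree m => True) k) =
      Nat.card {t : BTree m // t.edges = k ∧ True} := fun k =>
    Nat.card_congr (Equiv.subtypeEquivRight (fun t => by simp [BTreeAux.QO]))
  have hB : BTreeAux.cntS (fun _ : BTree m => True) =
      C (m : ℚ) + 2 * C (m : ℚ) * X * BTreeAux.cntS (fun _ : BTree m => True)
        + C (m : ℚ) * X ^ 2 * (BTreeAux.cntS (fun _ : BTree m => True)) ^ 2 := by
    have h1 := BTreeAux.master (m := m) (fun _ : BTree m => True)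
    rw [← h1]
    ext n
    rw [BTreeAux.cntS, coeff_mk, coeff_mk]
    exact_mod_cast (hcard n).symm
  have hBAC : BTreeAux.cntS (fun _ : BTree m => True) = Aser + Cser := by
    ext n
    rw [map_add, BTreeAux.cntS, coeff_mk, coeff_mk, coeff_mk]
    exact_mod_cast BTreeAux.partition u n
  refine ⟨1 - 2 * C (m : ℚ) * X - 2 * C (m : ℚ) * X ^ 2 * Aser,
          1 - 2 * C (m : ℚ) * X - 2 * C (m : ℚ) * X ^ 2 * BTreeAux.cntS (fun _ : BTree m => True),
          ?_, ?_, ?_, ?_, ?_, ?_⟩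
  · linear_combination (-(4 * C (m : ℚ) * X ^ 2)) * hA
  · simp
  · linear_combination (-(4 * C (m : ℚ) * X ^ 2)) * hB
  · simp
  · ring
  · linear_combination (-(2 * C (m : ℚ) * X ^ 2)) * hBAC
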